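/- Consider the FGM construction where every marginal cdf is F_k(x) = 1 − e^{−βx}, x ≥ 0, for a common rate β > 0: I : Ω → {0,1}^d a random vector, X^[1]_k with cdf 1−(1−F_k)^2, X^[2]_k with cdf F_k^2, all 2d+1 random elements mutually independent, X_k = (1−I_k)X^[1]_k + I_k X^[2]_k, and S = X_1 + ... + X_d. Let N = I_1 + ... + I_d. Then for every t ≥ 0, E[e^{−tS}] = (2β/(2β+t))^d · E[(β/(β+t))^{N}]. -/

import Mathlib

open MeasureTheory Set Filter Topology ProbabilityTheory
open scoped NNReal ENNReal

section helpers
lemma my_hasDeriv (b u : ℝ) (hb : b ≠ 0) :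
    HasDerivAt (fun u => -(1/b) * Real.exp (-b*u)) (Real.exp (-b*u)) u := by
  have h1 : HasDerivAt (fun u : ℝ => -b*u) (-b) u := by
    simpa using (hasDerivAt_id u).const_mul (-b)
  have h2 := (h1.exp).const_mul (-(1/b))
  refine h2.congr_deriv ?_
  have hbb : b⁻¹ * b = 1 := inv_mul_cancel₀ hb
  linear_combination (Real.exp (-b*u)) * hbb

lemma my_intervalIntegral (b x : ℝ) (hb : b ≠ 0) :
    ∫ u in (0:ℝ)..x, Real.exp (-b*u) = (1 - Real.exp (-b*x)) / b := by
  rw [intervalIntegral.integral_eq_sub_of_hasDerivAt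
    (fun u _ => my_hasDeriv b u hb)
    ((Real.continuous_exp.comp (continuous_const.mul continuous_id)).intervalIntegrable 0 x)]
  field_simp
  ring_nf
  rw [Real.exp_zero]; ring

lemma my_integral_Ioc (b x : ℝ) (hb : 0 < b) (hx : 0 ≤ x) :
    ∫ u in Ioc (0:ℝ) x, Real.exp (-b*u) = (1 - Real.exp (-b*x)) / b := by
  rw [← intervalIntegral.integral_of_le hx]
  exact my_intervalIntegral b x hb.ne'

lemma my_integral_Ioi (b : ℝ) (hb : 0 < b) :
    ∫ u in Ioi (0:ℝ), Real.exp (-b*u) = 1 / b := by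
  have := integral_Ioi_of_hasDerivAt_of_tendsto'
    (f := fun u => -(1/b) * Real.exp (-b*u)) (f' := fun u => Real.exp (-b*u))
    (a := 0) (m := 0) (fun u _ => my_hasDeriv b u hb.ne')
    (exp_neg_integrableOn_Ioi 0 hb) ?_
  · simpa using this
  · have h1 : Tendsto (fun u : ℝ => b * u) atTop atTop :=
      Tendsto.const_mul_atTop hb tendsto_id
    have h2 : Tendsto (fun u : ℝ => Real.exp (-b*u)) atTop (𝓝 0) := by
      have h3 := (Real.tendsto_exp_neg_atTop_nhds_zero).comp h1
      simp only [Function.comp_def, neg_mul] at h3 ⊢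
      exact h3
    simpa using h2.const_mul (-(1/b))

lemma my_lst_from_cdf {Ω : Type*} [MeasurableSpace Ω] (P : Measure Ω) [IsProbabilityMeasure P]
    (Y : Ω → ℝ) (hY : Measurable Y) (hYnn : ∀ ω, 0 ≤ Y ω)
    (g : ℝ → ℝ) (hg : Continuous g) (hgnn : ∀ x, 0 < x → 0 ≤ g x)
    (hgint : IntegrableOn g (Ioi 0))
    (hcdf : ∀ x, 0 ≤ x → (P {ω | Y ω ≤ x}).toReal = ∫ u in Ioc (0:ℝ) x, g u)
    (t : ℝ) :
    ∫ ω, Real.exp (-t * Y ω) ∂P = ∫ x in Ioi (0:ℝ), Real.exp (-t*x) * g x := by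
  set ν : Measure ℝ := (volume.restrict (Ioi 0)).withDensity (fun x => ENNReal.ofReal (g x)) with hν
  have hg_ae : 0 ≤ᵐ[volume.restrict (Ioi (0:ℝ))] g :=
    (ae_restrict_iff' measurableSet_Ioi).2 (ae_of_all _ fun x hx => hgnn x hx)
  have hfin : IsFiniteMeasure ν := by
    constructor
    rw [hν, withDensity_apply _ MeasurableSet.univ, Measure.restrict_univ,
      ← ofReal_integral_eq_lintegral_ofReal hgint hg_ae]
    exact ENNReal.ofReal_lt_top
  have hνx : ∀ x : ℝ, ν (Iic x) = ∫⁻ u in Ioc (0:ℝ) x, ENNReal.ofReal (g u) := by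
    intro x
    rw [hν, withDensity_apply _ measurableSet_Iic, Measure.restrict_restrict measurableSet_Iic,
      inter_comm, Ioi_inter_Iic]
  have hmap : Measure.map Y P = ν := by
    have : IsProbabilityMeasure (Measure.map Y P) := Measure.isProbabilityMeasure_map hY.aemeasurable
    refine Measure.ext_of_Iic _ _ (fun x => ?_)
    have hmp : Measure.map Y P (Iic x) = P {ω | Y ω ≤ x} := by
      rw [Measure.map_apply hY measurableSet_Iic]; rfl
    rcases lt_or_ge x 0 with hx | hx
    · rw [hmp, hνx]
      have h1 : {ω | Y ω ≤ x} = (∅ : Set Ω) := by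
        ext ω; simp only [mem_setOf_eq, mem_empty_iff_false, iff_false, not_le]
        exact lt_of_lt_of_le hx (hYnn ω)
      rw [h1, Ioc_eq_empty (by simpa using (hx.trans_le (le_refl 0)).not_gt), measure_empty]
      simp
    · rw [hmp, hνx,
        ← ofReal_integral_eq_lintegral_ofReal (hgint.mono_set Ioc_subset_Ioi_self)
          ((ae_restrict_iff' measurableSet_Ioc).2 (ae_of_all _ fun u hu => hgnn u hu.1)),
        ← hcdf x hx, ENNReal.ofReal_toReal (measure_ne_top P _)]
  calc ∫ ω, Real.exp (-t * Y ω) ∂P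
      = ∫ x, Real.exp (-t * x) ∂(Measure.map Y P) := by
        rw [integral_map hY.aemeasurable]
        exact (Real.continuous_exp.comp (continuous_const.mul continuous_id)).aestronglyMeasurable
    _ = ∫ x, Real.exp (-t * x) ∂ν := by rw [hmap]
    _ = ∫ x in Ioi (0:ℝ), Real.exp (-t*x) * g x := by
        rw [hν]
        have hmeas : Measurable fun x => Real.toNNReal (g x) := hg.measurable.real_toNNReal
        have h2 : (fun x => ENNReal.ofReal (g x))
            = fun x => ((Real.toNNReal (g x) : ℝ≥0) : ℝ≥0∞) := rfl
        rw [h2, integral_withDensity_eq_integral_smul hmeas]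
        refine setIntegral_congr_fun measurableSet_Ioi (fun x hx => ?_)
        simp only [NNReal.smul_def, Real.coe_toNNReal _ (hgnn x hx), smul_eq_mul]
        ring

lemma my_integral_prod {ι : Type*} {Ω : Type*} [MeasurableSpace Ω] {P : Measure Ω}
    [IsProbabilityMeasure P] {κ : ι → Type*} [mκ : ∀ i, MeasurableSpace (κ i)]
    {f : ∀ i, Ω → κ i} (hf : ∀ i, Measurable (f i))
    (hIndep : iIndepFun f P)
    (g : ∀ i, κ i → ℝ) (hg : ∀ i, Measurable (g i)) (hgnn : ∀ i x, 0 ≤ g i x)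
    (S : Finset ι) :
    ∫ ω, ∏ i ∈ S, g i (f i ω) ∂P = ∏ i ∈ S, ∫ ω, g i (f i ω) ∂P := by
  classical
  induction S using Finset.induction_on with
  | empty => simp
  | @insert a S ha ih =>
    simp_rw [Finset.prod_insert ha]
    have hdisj : Disjoint ({a} : Finset ι) S := by simpa using ha
    have hbase := hIndep.indepFun_finset {a} S hdisj hf
    have hφ : Measurable fun v : (∀ i : ({a} : Finset ι), κ i) =>
        g a (v ⟨a, Finset.mem_singleton_self a⟩) :=
      (hg a).comp (measurable_pi_apply _)
    have hψ : Measurable fun v : (∀ i : (S : Finset ι), κ i) =>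
        ∏ i ∈ S.attach, g i (v i) :=
      Finset.measurable_prod _ (fun i _ => (hg i).comp (measurable_pi_apply _))
    have hind : IndepFun (fun ω => g a (f a ω)) (fun ω => ∏ i ∈ S.attach, g i (f i ω)) P := by
      have := hbase.comp hφ hψ
      exact this
    have hprod_eq : ∀ ω, (∏ i ∈ S.attach, g i (f i ω)) = ∏ i ∈ S, g i (f i ω) := fun ω =>
      Finset.prod_attach S fun i => g i (f i ω)
    have hmul := hind.integral_fun_mul_eq_mul_integral
      ((hg a).comp (hf a)).aestronglyMeasurable
      (Finset.measurable_prod S.attach (fun i _ => (hg i).comp (hf i))).aestronglyMeasurable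
    calc ∫ ω, g a (f a ω) * ∏ i ∈ S, g i (f i ω) ∂P
        = ∫ ω, g a (f a ω) * ∏ i ∈ S.attach, g i (f i ω) ∂P := by
          simp_rw [hprod_eq]
      _ = (∫ ω, g a (f a ω) ∂P) * ∫ ω, ∏ i ∈ S.attach, g i (f i ω) ∂P := hmul
      _ = (∫ ω, g a (f a ω) ∂P) * ∏ i ∈ S, ∫ ω, g i (f i ω) ∂P := by
          simp_rw [hprod_eq]; rw [ih]
end helpers

open ProbabilityTheory

/-- Codomains of the `2d+1` random elements in the FGM construction. -/
def fgmType (d : ℕ) : Option (Fin d × Fin 2) → Type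
  | none => Fin d → Fin 2
  | some _ => ℝ

instance fgmTypeMeasurableSpace (d : ℕ) (o : Option (Fin d × Fin 2)) :
    MeasurableSpace (fgmType d o) := by
  cases o with
  | none => exact (inferInstance : MeasurableSpace (Fin d → Fin 2))
  | some p => exact (inferInstance : MeasurableSpace ℝ)

/-- The family consisting of the Bernoulli random vector `I` together with the `2d`
order-statistic components `X j k` (`j = 0`: minimum, `j = 1`: maximum). -/
def fgmFamily {Ω : Type*} (d : ℕ) (I : Ω → Fin d → Fin 2)
    (X : Fin 2 → Fin d → Ω → ℝ) : (o : Option (Fin d × Fin 2)) → Ω → fgmType d o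
  | none => I
  | some p => X p.2 p.1

/-- The test functions used in the factorization. -/
noncomputable def fgmG (d : ℕ) (t : ℝ) (i : Fin d → Fin 2) :
    (o : Option (Fin d × Fin 2)) → fgmType d o → ℝ
  | none => fun v => if (show Fin d → Fin 2 from v) = i then 1 else 0
  | some _ => fun x => Real.exp (-t * (show ℝ from x))

lemma fgmG_meas (d : ℕ) (t : ℝ) (i : Fin d → Fin 2) (o : Option (Fin d × Fin 2)) :
    Measurable (fgmG d t i o) := by
  cases o with
  | none =>
    have h : Measurable (fun v : Fin d → Fin 2 => if v = i then (1:ℝ) else 0) :=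
      Measurable.ite (measurableSet_eq (a := i)) measurable_const measurable_const
    exact h
  | some p =>
    have h : Measurable (fun x : ℝ => Real.exp (-t * x)) :=
      (Real.continuous_exp.comp (continuous_const.mul continuous_id)).measurable
    exact h

lemma fgmG_nonneg (d : ℕ) (t : ℝ) (i : Fin d → Fin 2) (o : Option (Fin d × Fin 2))
    (x : fgmType d o) : 0 ≤ fgmG d t i o x := by
  cases o with
  | none =>
    have h : ∀ v : Fin d → Fin 2, 0 ≤ (if v = i then (1:ℝ) else 0) := by
      intro v; split <;> norm_num
    exact h x
  | some p => exact (Real.exp_pos _).le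

/-- formula (4.4): the Laplace–Stieltjes transform of the aggregate
rv of the FGM construction with identical exponential marginals
`F_k(x) = 1 − e^{−βx}`, in terms of the pgf of `N = I_1 + ⋯ + I_d`. -/
theorem fgm_aggregate_lst_exponential {Ω : Type*} [MeasurableSpace Ω]
    (P : Measure Ω) [IsProbabilityMeasure P] (d : ℕ) (β : ℝ) (hβ : 0 < β)
    (I : Ω → Fin d → Fin 2) (X : Fin 2 → Fin d → Ω → ℝ)
    (hI : Measurable I) (hX : ∀ j k, Measurable (X j k))
    (hnonneg : ∀ j k ω, 0 ≤ X j k ω)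
    (hIndep : iIndepFun (fgmFamily d I X) P)
    (hcdf_min : ∀ (k : Fin d) (x : ℝ), 0 ≤ x →
      (P {ω | X 0 k ω ≤ x}).toReal = 1 - (1 - (1 - Real.exp (-β * x))) ^ 2)
    (hcdf_max : ∀ (k : Fin d) (x : ℝ), 0 ≤ x →
      (P {ω | X 1 k ω ≤ x}).toReal = (1 - Real.exp (-β * x)) ^ 2) :
    ∀ t : ℝ, 0 ≤ t →
      ∫ ω, Real.exp (-t * ∑ k,
          ((1 - ((I ω k : ℕ) : ℝ)) * X 0 k ω + ((I ω k : ℕ) : ℝ) * X 1 k ω)) ∂P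
        = (2 * β / (2 * β + t)) ^ d
            * ∫ ω, (β / (β + t)) ^ (∑ k, (I ω k : ℕ)) ∂P := by
  intro t ht
  classical
  have hβt : 0 < β + t := by linarith
  have h2βt : 0 < 2 * β + t := by linarith
  set r : ℝ := β / (β + t) with hr
  set L : ℝ := 2 * β / (2 * β + t) with hL
  -- the two marginal Laplace transforms
  have hE0 : ∀ k, ∫ ω, Real.exp (-t * X 0 k ω) ∂P = L := by
    intro k
    have h := my_lst_from_cdf P (X 0 k) (hX 0 k) (hnonneg 0 k)
      (fun x => 2 * β * Real.exp (-(2*β) * x))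
      (by continuity) (fun x _ => by positivity)
      ((exp_neg_integrableOn_Ioi 0 (by linarith)).const_mul _) ?_ t
    · rw [h]
      have hcong : ∀ x ∈ Ioi (0:ℝ),
          Real.exp (-t*x) * (2 * β * Real.exp (-(2*β) * x))
            = 2 * β * Real.exp (-(2*β+t) * x) := by
        intro x _
        rw [show (-(2*β+t) * x) = -t*x + (-(2*β)*x) by ring, Real.exp_add]
        ring
      rw [setIntegral_congr_fun measurableSet_Ioi hcong, integral_const_mul,
        my_integral_Ioi _ (by linarith), hL]
      field_simp
    · intro x hx
      rw [hcdf_min k x hx, integral_const_mul, my_integral_Ioc _ _ (by linarith) hx]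
      have h2 : Real.exp (-(2*β) * x) = Real.exp (-β * x) ^ 2 := by
        rw [sq, ← Real.exp_add]; ring_nf
      rw [h2]
      field_simp
      ring
  have hE1 : ∀ k, ∫ ω, Real.exp (-t * X 1 k ω) ∂P = L * r := by
    intro k
    have hint1 : IntegrableOn (fun x => 2 * β * Real.exp (-β * x)) (Ioi (0:ℝ)) :=
      (exp_neg_integrableOn_Ioi 0 (by linarith)).const_mul _
    have hint2 : IntegrableOn (fun x => 2 * β * Real.exp (-(2*β) * x)) (Ioi (0:ℝ)) :=
      (exp_neg_integrableOn_Ioi 0 (by linarith)).const_mul _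
    have h := my_lst_from_cdf P (X 1 k) (hX 1 k) (hnonneg 1 k)
      (fun x => 2 * β * Real.exp (-β * x) - 2 * β * Real.exp (-(2*β) * x))
      (by continuity)
      (fun x hx => by
        have h1 : Real.exp (-(2*β) * x) ≤ Real.exp (-β * x) := by
          apply Real.exp_le_exp.2; nlinarith [mul_pos hβ hx]
        have h2 := mul_le_mul_of_nonneg_left h1 (by linarith : (0:ℝ) ≤ 2*β)
        linarith)
      (hint1.sub hint2) ?_ t
    · rw [h]
      have hcong : ∀ x ∈ Ioi (0:ℝ),
          Real.exp (-t*x) * (2 * β * Real.exp (-β * x) - 2 * β * Real.exp (-(2*β) * x))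
            = 2 * β * Real.exp (-(β+t) * x) - 2 * β * Real.exp (-(2*β+t) * x) := by
        intro x _
        rw [show (-(β+t) * x) = -t*x + (-β*x) by ring,
          show (-(2*β+t) * x) = -t*x + (-(2*β)*x) by ring, Real.exp_add, Real.exp_add]
        ring
      rw [setIntegral_congr_fun measurableSet_Ioi hcong,
        integral_sub ((exp_neg_integrableOn_Ioi 0 (by linarith : (0:ℝ) < β + t)).const_mul _)
          ((exp_neg_integrableOn_Ioi 0 (by linarith : (0:ℝ) < 2*β + t)).const_mul _),
        integral_const_mul, integral_const_mul,
        my_integral_Ioi _ (by linarith), my_integral_Ioi _ (by linarith), hL, hr]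
      field_simp
      ring
    · intro x hx
      rw [hcdf_max k x hx,
        integral_sub (hint1.mono_set Ioc_subset_Ioi_self) (hint2.mono_set Ioc_subset_Ioi_self),
        integral_const_mul, integral_const_mul,
        my_integral_Ioc _ _ (by linarith) hx, my_integral_Ioc _ _ (by linarith) hx]
      have h2 : Real.exp (-(2*β) * x) = Real.exp (-β * x) ^ 2 := by
        rw [sq, ← Real.exp_add]; ring_nf
      rw [h2]
      field_simp
      ring
  have hE : ∀ (j : Fin 2) (k : Fin d),
      ∫ ω, Real.exp (-t * X j k ω) ∂P = L * r ^ (j : ℕ) := by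
    intro j k
    have h01 : j = 0 ∨ j = 1 := by omega
    rcases h01 with h | h <;> subst h
    · simpa using hE0 k
    · simpa using hE1 k
  -- measurability of the family
  have hFmeas : ∀ o, Measurable (fgmFamily d I X o) := by
    intro o
    cases o with
    | none => exact hI
    | some p => exact hX p.2 p.1
  -- indicator integrals
  have hms : ∀ i : Fin d → Fin 2, MeasurableSet {ω | I ω = i} :=
    fun i => hI (measurableSet_singleton i)
  have hind_eq : ∀ i : Fin d → Fin 2,
      (fun ω => if I ω = i then (1:ℝ) else 0)
        = Set.indicator {ω | I ω = i} (fun _ => (1:ℝ)) := by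
    intro i; funext ω; rw [Set.indicator_apply]; rfl
  have hind_int : ∀ i : Fin d → Fin 2,
      Integrable (fun ω => if I ω = i then (1:ℝ) else 0) P := by
    intro i; rw [hind_eq i]; exact (integrable_const 1).indicator (hms i)
  have hind_val : ∀ i : Fin d → Fin 2,
      ∫ ω, (if I ω = i then (1:ℝ) else 0) ∂P = (P {ω | I ω = i}).toReal := by
    intro i; rw [hind_eq i, integral_indicator_const _ (hms i)]; simp; rfl
  -- the index sets
  set S : (Fin d → Fin 2) → Finset (Option (Fin d × Fin 2)) :=
    fun i => insert none ((Finset.univ : Finset (Fin d)).image (fun k => some (k, i k)))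
    with hSdef
  have hnone_not : ∀ i : Fin d → Fin 2,
      none ∉ (Finset.univ : Finset (Fin d)).image (fun k => some (k, i k)) := by
    intro i; simp
  have hinj : ∀ i : Fin d → Fin 2, ∀ x ∈ (Finset.univ : Finset (Fin d)),
      ∀ y ∈ (Finset.univ : Finset (Fin d)),
      (fun k => some (k, i k)) x = (fun k => some (k, i k)) y → x = y := by
    intro i x _ y _ h
    exact (Prod.ext_iff.1 (Option.some.inj h)).1
  -- decomposition of the factorized term
  have hdecomp : ∀ (i : Fin d → Fin 2) (ω : Ω),
      (if I ω = i then (1:ℝ) else 0) * ∏ k, Real.exp (-t * X (i k) k ω)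
        = ∏ o ∈ S i, fgmG d t i o (fgmFamily d I X o ω) := by
    intro i ω
    rw [hSdef, Finset.prod_insert (hnone_not i), Finset.prod_image (hinj i)]
    rfl
  -- value of each factored integral
  have hterm : ∀ i : Fin d → Fin 2,
      ∫ ω, (if I ω = i then (1:ℝ) else 0) * ∏ k, Real.exp (-t * X (i k) k ω) ∂P
        = (P {ω | I ω = i}).toReal * (L ^ d * r ^ (∑ k, ((i k : ℕ)))) := by
    intro i
    have h1 : ∫ ω, (if I ω = i then (1:ℝ) else 0) * ∏ k, Real.exp (-t * X (i k) k ω) ∂P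
        = ∫ ω, ∏ o ∈ S i, fgmG d t i o (fgmFamily d I X o ω) ∂P := by
      congr 1; funext ω; exact hdecomp i ω
    rw [h1, my_integral_prod hFmeas hIndep (fgmG d t i) (fgmG_meas d t i)
      (fgmG_nonneg d t i) (S i)]
    rw [hSdef, Finset.prod_insert (hnone_not i), Finset.prod_image (hinj i)]
    have h2 : ∫ ω, fgmG d t i none (fgmFamily d I X none ω) ∂P
        = (P {ω | I ω = i}).toReal := hind_val i
    have h3 : ∀ k : Fin d,
        ∫ ω, fgmG d t i (some (k, i k)) (fgmFamily d I X (some (k, i k)) ω) ∂P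
          = L * r ^ ((i k : ℕ)) := fun k => hE (i k) k
    rw [h2]
    congr 1
    calc ∏ k : Fin d,
          ∫ ω, fgmG d t i (some (k, i k)) (fgmFamily d I X (some (k, i k)) ω) ∂P
        = ∏ k : Fin d, L * r ^ ((i k : ℕ)) := Finset.prod_congr rfl fun k _ => h3 k
      _ = (∏ _k : Fin d, L) * ∏ k : Fin d, r ^ ((i k : ℕ)) := Finset.prod_mul_distrib
      _ = L ^ d * r ^ (∑ k, ((i k : ℕ))) := by
          rw [Finset.prod_const, Finset.prod_pow_eq_pow_sum]
          simp
  -- pointwise decomposition of the integrands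
  have h01 : ∀ c : Fin 2, c = 0 ∨ c = 1 := by decide
  have hXsel : ∀ (ω : Ω) (k : Fin d),
      (1 - ((I ω k : ℕ) : ℝ)) * X 0 k ω + ((I ω k : ℕ) : ℝ) * X 1 k ω
        = X (I ω k) k ω := by
    intro ω k
    rcases h01 (I ω k) with h | h <;> rw [h] <;> norm_num
  have hpoint : ∀ ω : Ω,
      Real.exp (-t * ∑ k,
          ((1 - ((I ω k : ℕ) : ℝ)) * X 0 k ω + ((I ω k : ℕ) : ℝ) * X 1 k ω))
        = ∑ i : Fin d → Fin 2,
            (if I ω = i then (1:ℝ) else 0) * ∏ k, Real.exp (-t * X (i k) k ω) := by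
    intro ω
    rw [Finset.sum_eq_single (I ω)
      (fun i _ hne => by rw [if_neg (fun h => hne h.symm), zero_mul])
      (fun h => absurd (Finset.mem_univ _) h)]
    rw [if_pos rfl, one_mul, Finset.mul_sum, Real.exp_sum]
    refine Finset.prod_congr rfl fun k _ => ?_
    rw [hXsel ω k]
  have hpointR : ∀ ω : Ω,
      r ^ (∑ k, ((I ω k : ℕ)))
        = ∑ i : Fin d → Fin 2,
            (if I ω = i then (1:ℝ) else 0) * r ^ (∑ k, ((i k : ℕ))) := by
    intro ω
    rw [Finset.sum_eq_single (I ω)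
      (fun i _ hne => by rw [if_neg (fun h => hne h.symm), zero_mul])
      (fun h => absurd (Finset.mem_univ _) h)]
    rw [if_pos rfl, one_mul]
  -- integrability of the summands
  have hterm_int : ∀ i : Fin d → Fin 2,
      Integrable (fun ω =>
        (if I ω = i then (1:ℝ) else 0) * ∏ k, Real.exp (-t * X (i k) k ω)) P := by
    intro i
    have hmeas : Measurable (fun ω =>
        (if I ω = i then (1:ℝ) else 0) * ∏ k, Real.exp (-t * X (i k) k ω)) := by
      refine Measurable.mul ?_ ?_
      · exact Measurable.ite (hms i) measurable_const measurable_const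
      · exact Finset.measurable_prod _ fun k _ =>
          (Real.measurable_exp.comp ((hX (i k) k).const_mul (-t)))
    have hnn : ∀ ω, 0 ≤ (if I ω = i then (1:ℝ) else 0) * ∏ k, Real.exp (-t * X (i k) k ω) := by
      intro ω
      refine mul_nonneg ?_ (Finset.prod_nonneg fun k _ => (Real.exp_pos _).le)
      split <;> norm_num
    have hle : ∀ ω, (if I ω = i then (1:ℝ) else 0) * ∏ k, Real.exp (-t * X (i k) k ω) ≤ 1 := by
      intro ω
      refine mul_le_one₀ ?_ (Finset.prod_nonneg fun k _ => (Real.exp_pos _).le) ?_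
      · split <;> norm_num
      · refine Finset.prod_le_one (fun k _ => (Real.exp_pos _).le) fun k _ => ?_
        rw [Real.exp_le_one_iff]
        have := hnonneg (i k) k ω
        nlinarith
    refine Integrable.mono' (integrable_const (1:ℝ)) hmeas.aestronglyMeasurable
      (ae_of_all _ fun ω => ?_)
    rw [Real.norm_eq_abs, abs_of_nonneg (hnn ω)]
    exact hle ω
  -- the right-hand side integral
  have hRHS : ∫ ω, r ^ (∑ k, ((I ω k : ℕ))) ∂P
      = ∑ i : Fin d → Fin 2, (P {ω | I ω = i}).toReal * r ^ (∑ k, ((i k : ℕ))) := by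
    rw [show (fun ω => r ^ (∑ k, ((I ω k : ℕ))))
        = fun ω => ∑ i : Fin d → Fin 2,
            (if I ω = i then (1:ℝ) else 0) * r ^ (∑ k, ((i k : ℕ))) from funext hpointR]
    rw [integral_finset_sum _ (fun i _ => (hind_int i).mul_const _)]
    refine Finset.sum_congr rfl fun i _ => ?_
    rw [integral_mul_const, hind_val i]
  -- putting everything together
  calc ∫ ω, Real.exp (-t * ∑ k,
          ((1 - ((I ω k : ℕ) : ℝ)) * X 0 k ω + ((I ω k : ℕ) : ℝ) * X 1 k ω)) ∂P
      = ∫ ω, ∑ i : Fin d → Fin 2,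
          (if I ω = i then (1:ℝ) else 0) * ∏ k, Real.exp (-t * X (i k) k ω) ∂P := by
        congr 1; funext ω; exact hpoint ω
    _ = ∑ i : Fin d → Fin 2, ∫ ω,
          (if I ω = i then (1:ℝ) else 0) * ∏ k, Real.exp (-t * X (i k) k ω) ∂P :=
        integral_finset_sum _ (fun i _ => hterm_int i)
    _ = ∑ i : Fin d → Fin 2,
          (P {ω | I ω = i}).toReal * (L ^ d * r ^ (∑ k, ((i k : ℕ)))) :=
        Finset.sum_congr rfl fun i _ => hterm i
    _ = L ^ d * ∑ i : Fin d → Fin 2,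
          (P {ω | I ω = i}).toReal * r ^ (∑ k, ((i k : ℕ))) := by
        rw [Finset.mul_sum]
        exact Finset.sum_congr rfl fun i _ => by ring
    _ = L ^ d * ∫ ω, r ^ (∑ k, ((I ω k : ℕ))) ∂P := by rw [hRHS]
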